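/- If a consumption experiment satisfies cyclical monotonicity, then it can be rationalized by a quasilinear utility function v(x,m) = u(x) + m; moreover, u can be chosen continuous and monotone (decreasing in each coordinate of x interpreted appropriately, i.e., monotone with respect to the order induced by the μ^t functions). -/
import Mathlib

/-- Cost of a path `k 0, k 1, ..., k m` with edge costs `c`. -/
private def pcost {T : ℕ} (c : Fin T → Fin T → ℝ) (k : ℕ → Fin T) (m : ℕ) : ℝ :=
  ∑ j ∈ Finset.range m, c (k j) (k (j + 1))

/-- Removing a cycle (from position `i` to position `i + d`) from a path splits its cost. -/
private lemma pcost_splice {T : ℕ} (c : Fin T → Fin T → ℝ) (k : ℕ → Fin T)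
    (i d r : ℕ) (hk : k (i + d) = k i) :
    pcost c k (i + d + r)
      = pcost c (fun l => if l < i then k l else k (l + d)) (i + r)
        + pcost c (fun l => k (i + l)) d := by
  unfold pcost
  rw [show i + d + r = i + (d + r) by ring, Finset.sum_range_add, Finset.sum_range_add,
    Finset.sum_range_add]
  have h1 : ∑ l ∈ Finset.range i,
      c ((fun l => if l < i then k l else k (l + d)) l)
        ((fun l => if l < i then k l else k (l + d)) (l + 1))
      = ∑ l ∈ Finset.range i, c (k l) (k (l + 1)) := by
    apply Finset.sum_congr rfl
    intro l hl
    rw [Finset.mem_range] at hl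
    simp only
    rcases eq_or_lt_of_le (Nat.succ_le_of_lt hl) with h | h
    · rw [if_pos hl, if_neg (by omega), show l + 1 + d = i + d by omega, hk, ← h]
    · rw [if_pos hl, if_pos h]
  have h2 : ∑ l ∈ Finset.range r,
      c ((fun l => if l < i then k l else k (l + d)) (i + l))
        ((fun l => if l < i then k l else k (l + d)) (i + l + 1))
      = ∑ l ∈ Finset.range r, c (k (i + (d + l))) (k (i + (d + l) + 1)) := by
    apply Finset.sum_congr rfl
    intro l _
    simp only
    rw [if_neg (by omega), if_neg (by omega), show i + l + d = i + (d + l) by ring,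
      show i + l + 1 + d = i + (d + l) + 1 by ring]
  have h3 : ∑ l ∈ Finset.range d,
      c ((fun l => k (i + l)) l) ((fun l => k (i + l)) (l + 1))
      = ∑ l ∈ Finset.range d, c (k (i + l)) (k (i + l + 1)) := by
    apply Finset.sum_congr rfl
    intro l _
    simp only [show i + (l + 1) = i + l + 1 by ring]
  rw [h1, h2, h3]
  ring

/-- Sufficiency: if a consumption experiment satisfies cyclical monotonicity, then it is
rationalized by a quasilinear utility `v(x,m) = u(x) + m`, where moreover the subutility `u`
can be chosen continuous and monotone (increasing on `X`). -/
theorem cyclical_monotonicity_implies_ql_rationalization {n T : ℕ} (hT : 0 < T)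
    (X : Set (Fin n → ℝ)) (xs : Fin T → (Fin n → ℝ)) (hxX : ∀ t, xs t ∈ X)
    (μ : Fin T → (Fin n → ℝ) → ℝ)
    (hcont : ∀ t, ContinuousOn (μ t) X)
    (hdecr : ∀ t, ∀ x ∈ X, ∀ y ∈ X, x ≤ y → μ t y ≤ μ t x)
    (hsdecr : ∀ t, ∀ x ∈ X, ∀ y ∈ X, x < y → μ t y < μ t x)
    (hcyc : ∀ (N : ℕ) (k : ℕ → Fin T), 0 < N → k N = k 0 →
      0 ≤ ∑ j ∈ Finset.range N,
        (μ (k j) (xs (k j)) - μ (k (j + 1)) (xs (k j)))) :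
    ∃ u : (Fin n → ℝ) → ℝ,
      ContinuousOn u X ∧
      (∀ x ∈ X, ∀ y ∈ X, x ≤ y → u x ≤ u y) ∧
      (∀ t, ∀ x ∈ X, ∀ m : ℝ, m ≤ μ t x → u x + m ≤ u (xs t) + μ t (xs t)) := by
  haveI : Nonempty (Fin T) := ⟨⟨0, hT⟩⟩
  -- edge costs
  set c : Fin T → Fin T → ℝ := fun s t => μ s (xs s) - μ s (xs t) with hc
  -- cyclical monotonicity for the edge costs `c` (reverse the cycle in `hcyc`)
  have hcycC : ∀ (N : ℕ) (k : ℕ → Fin T), 0 < N → k N = k 0 → 0 ≤ pcost c k N := by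
    intro N k hN hkN
    have h1 := hcyc N (fun j => k (N - j)) hN (by simp [hkN])
    have hrefl := Finset.sum_range_reflect
      (fun j => μ (k (j + 1)) (xs (k (j + 1))) - μ (k j) (xs (k (j + 1)))) N
    have h2 : (∑ j ∈ Finset.range N,
        (μ ((fun j => k (N - j)) j) (xs ((fun j => k (N - j)) j))
          - μ ((fun j => k (N - j)) (j + 1)) (xs ((fun j => k (N - j)) j))))
        = ∑ j ∈ Finset.range N,
          (μ (k (N - 1 - j + 1)) (xs (k (N - 1 - j + 1)))
            - μ (k (N - 1 - j)) (xs (k (N - 1 - j + 1)))) := by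
      apply Finset.sum_congr rfl
      intro j hj
      rw [Finset.mem_range] at hj
      simp only
      rw [show N - j = N - 1 - j + 1 by omega, show N - (j + 1) = N - 1 - j by omega]
    rw [h2, hrefl] at h1
    -- h1 : 0 ≤ ∑ j, (μ (k (j+1)) (xs (k (j+1))) - μ (k j) (xs (k (j+1))))
    have h3 : pcost c k N
        = (∑ j ∈ Finset.range N,
            (μ (k (j + 1)) (xs (k (j + 1))) - μ (k j) (xs (k (j + 1)))))
          + ∑ j ∈ Finset.range N,
            (μ (k j) (xs (k j)) - μ (k (j + 1)) (xs (k (j + 1)))) := by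
      unfold pcost
      rw [← Finset.sum_add_distrib]
      apply Finset.sum_congr rfl
      intro j _
      simp only [hc]
      ring
    rw [h3, Finset.sum_range_sub' (fun j => μ (k j) (xs (k j))) N, hkN]
    simpa using h1
  -- a uniform lower bound on edge costs
  obtain ⟨p, hp⟩ := Finite.exists_min (fun p : Fin T × Fin T => c p.1 p.2)
  set C : ℝ := max 0 (-(c p.1 p.2)) with hCdef
  have hC0 : 0 ≤ C := le_max_left _ _
  have hCle : ∀ s t, -C ≤ c s t := by
    intro s t
    have := hp (s, t)
    have h' : -(c p.1 p.2) ≤ C := le_max_right _ _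
    simp only at this
    linarith
  -- uniform lower bound on path costs, using cycle removal
  have lb : ∀ m : ℕ, ∀ k : ℕ → Fin T, -((T : ℝ) * C) ≤ pcost c k m := by
    intro m
    induction m using Nat.strong_induction_on with
    | _ m ih =>
      intro k
      by_cases hm : m ≤ T
      · have hsum : ∑ j ∈ Finset.range m, (-C) ≤ pcost c k m := by
          apply Finset.sum_le_sum
          intro j _
          exact hCle (k j) (k (j + 1))
        rw [Finset.sum_const, Finset.card_range] at hsum
        have hmT : (m : ℝ) ≤ (T : ℝ) := Nat.cast_le.mpr hm
        have : -((T : ℝ) * C) ≤ (m : ℝ) * (-C) := by nlinarith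
        calc -((T : ℝ) * C) ≤ (m : ℝ) * (-C) := this
          _ = m • (-C) := by simp [nsmul_eq_mul]
          _ ≤ pcost c k m := hsum
      · push_neg at hm
        -- pigeonhole: some vertex repeats among k 0, ..., k m
        have hcard : Fintype.card (Fin T) < Fintype.card (Fin (m + 1)) := by
          simp only [Fintype.card_fin]; omega
        obtain ⟨a, b, hab, heq⟩ :=
          Fintype.exists_ne_map_eq_of_card_lt (fun i : Fin (m + 1) => k i) hcard
        -- arrange i < j
        obtain ⟨i, j, hij, hjm, hki⟩ :
            ∃ i j : ℕ, i < j ∧ j ≤ m ∧ k i = k j := by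
          rcases lt_or_gt_of_ne (fun h => hab (by exact Fin.ext (by exact_mod_cast congrArg Fin.val h))) with h | h
          · exact ⟨a, b, h, Nat.lt_succ_iff.mp b.isLt, heq⟩
          · exact ⟨b, a, h, Nat.lt_succ_iff.mp a.isLt, heq.symm⟩
        set d := j - i with hd
        set r := m - j with hr
        have hmeq : m = i + d + r := by omega
        have hkid : k (i + d) = k i := by rw [show i + d = j by omega, hki]
        have hsplice := pcost_splice c k i d r hkid
        have hcyc0 : 0 ≤ pcost c (fun l => k (i + l)) d := by
          apply hcycC d _ (by omega)
          show k (i + d) = k (i + 0)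
          rw [Nat.add_zero, hkid]
        have hlt : i + r < m := by omega
        have := ih (i + r) hlt (fun l => if l < i then k l else k (l + d))
        rw [hmeq]
        rw [hsplice]
        linarith
  -- the potential: infimum of costs of paths ending at `t`
  set S : Fin T → Set ℝ := fun t => {v | ∃ m k, k m = t ∧ pcost c k m = v} with hS
  have hne : ∀ t, (S t).Nonempty := by
    intro t
    exact ⟨0, 0, fun _ => t, rfl, by simp [pcost]⟩
  have hbdd : ∀ t, BddBelow (S t) := by
    intro t
    refine ⟨-((T : ℝ) * C), ?_⟩
    rintro v ⟨m, k, hk, rfl⟩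
    exact lb m k
  set w : Fin T → ℝ := fun t => sInf (S t) with hw
  -- triangle inequality for the potential
  have tri : ∀ s t, w t ≤ w s + c s t := by
    intro s t
    have key : ∀ v ∈ S s, w t - c s t ≤ v := by
      rintro v ⟨m, k, hk, rfl⟩
      set k2 : ℕ → Fin T := fun l => if l ≤ m then k l else t with hk2
      have hmem : pcost c k m + c s t ∈ S t := by
        refine ⟨m + 1, k2, by simp [hk2], ?_⟩
        unfold pcost
        rw [Finset.sum_range_succ]
        congr 1
        · apply Finset.sum_congr rfl
          intro l hl
          rw [Finset.mem_range] at hl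
          simp only [hk2]
          rw [if_pos (by omega), if_pos (by omega)]
        · simp only [hk2]
          rw [if_pos le_rfl, if_neg (by omega), hk]
      have h' : w t ≤ pcost c k m + c s t := csInf_le (hbdd t) hmem
      linarith
    have h2 : w t - c s t ≤ w s := le_csInf (hne s) key
    linarith
  -- the subutility
  refine ⟨fun x => Finset.univ.inf' Finset.univ_nonempty
      (fun s => w s + (μ s (xs s) - μ s x)), ?_, ?_, ?_⟩
  · -- continuity
    apply ContinuousOn.finset_inf'_apply
    intro s _
    exact continuousOn_const.add (continuousOn_const.sub (hcont s))
  · -- monotonicity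
    intro x hx y hy hxy
    beta_reduce
    obtain ⟨s, -, hs⟩ := Finset.exists_mem_eq_inf' (Finset.univ_nonempty)
      (fun s => w s + (μ s (xs s) - μ s y))
    rw [hs]
    have h1 : Finset.univ.inf' Finset.univ_nonempty (fun s => w s + (μ s (xs s) - μ s x))
        ≤ w s + (μ s (xs s) - μ s x) := Finset.inf'_le _ (Finset.mem_univ s)
    have h2 : μ s y ≤ μ s x := hdecr s x hx y hy hxy
    linarith
  · -- rationalization
    intro t x hx m hm
    beta_reduce
    have h1 : Finset.univ.inf' Finset.univ_nonempty (fun s => w s + (μ s (xs s) - μ s x))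
        ≤ w t + (μ t (xs t) - μ t x) := Finset.inf'_le _ (Finset.mem_univ t)
    have h2 : w t ≤ Finset.univ.inf' Finset.univ_nonempty
        (fun s => w s + (μ s (xs s) - μ s (xs t))) := by
      apply Finset.le_inf'
      intro s _
      have := tri s t
      simp only [hc] at this
      linarith
    linarith
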